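/- Let (V,H,G) be a hypergram. If α₁ is an n₁-qubit Pauli assignment of (V,H,G) and α₂ is an n₂-qubit Pauli assignment of (V,H,G), then α₁ and α₂ have the same contextuality degree. -/

import Mathlib

open scoped Classical
open Matrix

noncomputable section

/-- The space of `n`-qubit operators, realized as matrices indexed by
`Fin n → Fin 2` (the `n`-fold tensor-product index). -/
abbrev QMat (n : ℕ) := Matrix (Fin n → Fin 2) (Fin n → Fin 2) ℂ

/-- The four Pauli matrices `I, X, Y, Z`. -/
def pauliMat : Fin 4 → Matrix (Fin 2) (Fin 2) ℂ
  | ⟨0, _⟩ => 1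
  | ⟨1, _⟩ => !![0, 1; 1, 0]
  | ⟨2, _⟩ => !![0, -Complex.I; Complex.I, 0]
  | ⟨3, _⟩ => !![1, 0; 0, -1]

/-- The `n`-fold Kronecker (tensor) product `G₁ ⊗ ⋯ ⊗ Gₙ` of the Pauli matrices
selected by `g : Fin n → Fin 4`, as a matrix indexed by `Fin n → Fin 2`. -/
def nPauli {n : ℕ} (g : Fin n → Fin 4) : QMat n :=
  Matrix.of fun r c => ∏ k, pauliMat (g k) (r k) (c k)

/-- `M` is an `n`-qubit Pauli observable. -/
def IsPauliObs (n : ℕ) (M : QMat n) : Prop := ∃ g : Fin n → Fin 4, M = nPauli g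

/-- `I^⊗n`, the `n`-fold tensor product of the identity. -/
def idN (n : ℕ) : QMat n := nPauli (fun _ => ⟨0, by omega⟩)

/-- Product of `f` over a finite set of naturals, taken in increasing order
(well-defined without commutativity; agrees with the unordered product when the
factors pairwise commute). -/
def natFinsetProd {M : Type*} [Monoid M] (s : Finset ℕ) (f : ℕ → M) : M :=
  ((s.sort (· ≤ ·)).map f).prod

/-- `(V,H,G)` is a hypergram: `V` a nonempty finite vertex set, `H` a set of
nonempty hyperedges covering `V`, `G` a set of 2-element edges on `V` forming a
simple reduced graph, no edge of `G` being contained in a hyperedge of `H`. -/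
def IsHypergram (V : Finset ℕ) (H G : Finset (Finset ℕ)) : Prop :=
  V.Nonempty ∧
  (∀ h ∈ H, h ⊆ V ∧ h.Nonempty) ∧
  (∀ v ∈ V, ∃ h ∈ H, v ∈ h) ∧
  (∀ e ∈ G, e ⊆ V ∧ e.card = 2) ∧
  (∀ v ∈ V, ∃ e ∈ G, v ∈ e) ∧
  (∀ v ∈ V, ∀ w ∈ V,
    (∀ u ∈ V, (({v, u} : Finset ℕ) ∈ G ↔ ({w, u} : Finset ℕ) ∈ G)) → v = w) ∧
  (∀ e ∈ G, ∀ h ∈ H, ¬ e ⊆ h)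

/-- `α` is an `n`-qubit Pauli assignment of the hypergram `(V,H,G)`. -/
def IsPauliAssignment (V : Finset ℕ) (H G : Finset (Finset ℕ)) (n : ℕ)
    (α : ℕ → QMat n) : Prop :=
  (∀ v ∈ V, IsPauliObs n (α v)) ∧
  (∀ v ∈ V, α v ≠ idN n) ∧
  (∀ v₁ ∈ V, ∀ v₂ ∈ V, α v₁ = α v₂ → v₁ = v₂) ∧
  (∀ v₁ ∈ V, ∀ v₂ ∈ V, v₁ ≠ v₂ →
    (α v₁ * α v₂ = -(α v₂ * α v₁) ↔ ({v₁, v₂} : Finset ℕ) ∈ G)) ∧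
  (∀ h ∈ H, natFinsetProd h α = idN n ∨ natFinsetProd h α = -(idN n))

/-- The sign `sgn_α(h) ∈ {−1,1}` of a hyperedge `h`: `∏_{v∈h} α(v) = sgn_α(h)·I^⊗n`. -/
def quantumSgn {n : ℕ} (α : ℕ → QMat n) (h : Finset ℕ) : ℤ :=
  if natFinsetProd h α = idN n then 1 else -1

/-- The sign `sgn_a(h) = ∏_{v∈h} a(v)` of a hyperedge for a classical assignment. -/
def classicalSgn (a : ℕ → ℤ) (h : Finset ℕ) : ℤ := ∏ v ∈ h, a v

/-- The contextuality degree of a Pauli assignment: the minimum over classical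
assignments `a : V → {−1,1}` of the number of hyperedges whose signs differ. -/
def contextualityDegree {n : ℕ} (H : Finset (Finset ℕ)) (α : ℕ → QMat n) : ℕ :=
  sInf { d : ℕ | ∃ a : ℕ → ℤ, (∀ v, a v = 1 ∨ a v = -1) ∧
    d = (H.filter (fun h => quantumSgn α h ≠ classicalSgn a h)).card }

/-- The context (incidence) matrix of a hypergram over 𝔽₂. -/
def contextMatrix (V : Finset ℕ) (H : Finset (Finset ℕ)) :
    Matrix {h // h ∈ H} {v // v ∈ V} (ZMod 2) :=
  Matrix.of fun h v => if v.1 ∈ h.1 then 1 else 0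

/-- The anticommutation (adjacency) matrix of a hypergram over 𝔽₂. -/
def anticommMatrix (V : Finset ℕ) (G : Finset (Finset ℕ)) :
    Matrix {v // v ∈ V} {v // v ∈ V} (ZMod 2) :=
  Matrix.of fun i j => if ({i.1, j.1} : Finset ℕ) ∈ G then 1 else 0

/-- The standard symplectic form on `𝔽₂^{2n}`:
`⟨x,y⟩ = Σ_{k=1}^{n} (x_{2k−1} y_{2k} + x_{2k} y_{2k−1})`. -/
def sympForm (n : ℕ) (x y : Fin (2 * n) → ZMod 2) : ZMod 2 :=
  ∑ k : Fin n,
    (x ⟨2 * k.1, by have := k.2; omega⟩ * y ⟨2 * k.1 + 1, by have := k.2; omega⟩ +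
     x ⟨2 * k.1 + 1, by have := k.2; omega⟩ * y ⟨2 * k.1, by have := k.2; omega⟩)

/-- The single-qubit encoding `ψ(I)=(0,0), ψ(X)=(0,1), ψ(Y)=(1,1), ψ(Z)=(1,0)`. -/
def psi4 : Fin 4 → (ZMod 2) × (ZMod 2)
  | ⟨0, _⟩ => (0, 0)
  | ⟨1, _⟩ => (0, 1)
  | ⟨2, _⟩ => (1, 1)
  | ⟨3, _⟩ => (1, 0)

/-- The encoding `ψ` of an `n`-qubit Pauli observable (given by its tensor
factors `g`) as a vector of `𝔽₂^{2n}`, concatenating the per-factor encodings. -/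
def psiVec {n : ℕ} (g : Fin n → Fin 4) : Fin (2 * n) → ZMod 2 := fun idx =>
  if idx.1 % 2 = 0 then (psi4 (g ⟨idx.1 / 2, by have := idx.2; omega⟩)).1
  else (psi4 (g ⟨idx.1 / 2, by have := idx.2; omega⟩)).2

/-- All pairs of elements of `S` commute. -/
def PairComm {n : ℕ} (S : Finset (QMat n)) : Prop := ∀ a ∈ S, ∀ b ∈ S, a * b = b * a

/-- The (well-defined) product of a finite set of pairwise commuting matrices. -/
def commProd {n : ℕ} (S : Finset (QMat n)) (h : PairComm S) : QMat n :=
  S.noncommProd id (fun a ha b hb _ => h a ha b hb)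

/-- Pairwise commutation is inherited by subsets. -/
def pairCommOfSubset {n : ℕ} {S T : Finset (QMat n)} (hST : S ⊆ T) (h : PairComm T) :
    PairComm S := fun a ha b hb => h a (hST ha) b (hST hb)

/-- `Q` (pairwise commuting) is independent: no nonempty subset has product `±I^⊗n`. -/
def IsIndep {n : ℕ} (Q : Finset (QMat n)) (hQ : PairComm Q) : Prop :=
  ∀ S : Finset (QMat n), ∀ (hS : S ⊆ Q), S.Nonempty →
    commProd S (pairCommOfSubset hS hQ) ≠ idN n ∧
    commProd S (pairCommOfSubset hS hQ) ≠ -(idN n)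

/-- The vertex set `{1, …, 15}`. -/
def V15 : Finset ℕ := Finset.Icc 1 15

/-- The 15 lines of the doily. -/
def doilyLines : Finset (Finset ℕ) :=
  { {1,2,3}, {1,8,9}, {1,10,11}, {2,4,6}, {2,5,7}, {3,12,15}, {3,13,14},
    {4,8,12}, {4,10,14}, {5,8,13}, {5,10,15}, {6,9,15}, {6,11,13},
    {7,9,14}, {7,11,12} }

/-- The 10 lines of the two-spread `H_{2s}`. -/
def twoSpreadLines : Finset (Finset ℕ) :=
  { {1,2,3}, {1,10,11}, {2,4,6}, {3,13,14}, {4,8,12}, {5,8,13}, {5,10,15},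
    {6,9,15}, {7,9,14}, {7,11,12} }

/-- The anticommutation graph `G_d = G_{2s}`: pairs of distinct vertices not on a
common doily line. -/
def doilyG : Finset (Finset ℕ) :=
  (V15.powersetCard 2).filter (fun e => ∀ h ∈ doilyLines, ¬ e ⊆ h)



open Kronecker
section Aux

/-- Abstract `n`-fold tensor of 2×2 matrices. -/
def tens {n : ℕ} (A : Fin n → Matrix (Fin 2) (Fin 2) ℂ) : QMat n :=
  Matrix.of fun r c => ∏ k, A k (r k) (c k)

lemma tens_mul {n : ℕ} (A B : Fin n → Matrix (Fin 2) (Fin 2) ℂ) :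
    tens A * tens B = tens (fun k => A k * B k) := by
  ext r c
  simp only [tens, Matrix.mul_apply, Matrix.of_apply]
  rw [Fintype.prod_sum (fun k j => A k (r k) j * B k j (c k))]
  exact Finset.sum_congr rfl fun x _ => (Finset.prod_mul_distrib).symm

lemma tens_one {n : ℕ} : tens (fun _ : Fin n => (1 : Matrix (Fin 2) (Fin 2) ℂ)) = 1 := by
  ext r c
  simp only [tens, Matrix.of_apply, Matrix.one_apply]
  by_cases h : r = c
  · subst h; simp
  · obtain ⟨k, hk⟩ := Function.ne_iff.mp h
    rw [if_neg h]
    exact Finset.prod_eq_zero (Finset.mem_univ k) (by simp [Matrix.one_apply, hk])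

lemma tens_smul {n : ℕ} (c : Fin n → ℂ) (A : Fin n → Matrix (Fin 2) (Fin 2) ℂ) :
    tens (fun k => c k • A k) = (∏ k, c k) • tens A := by
  ext r co
  simp [tens, Finset.prod_mul_distrib]

lemma pauli_sq (i : Fin 4) : pauliMat i * pauliMat i = 1 := by
  fin_cases i <;>
    · ext a b
      fin_cases a <;> fin_cases b <;>
        simp [pauliMat, Matrix.mul_apply, Fin.sum_univ_two, Matrix.one_apply] <;>
        ring_nf <;> simp [Complex.I_sq]

set_option maxHeartbeats 1000000 in
lemma pauli_comm (i j : Fin 4) : ∃ ε : ℂ, (ε = 1 ∨ ε = -1) ∧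
    pauliMat i * pauliMat j = ε • (pauliMat j * pauliMat i) := by
  fin_cases i <;> fin_cases j <;>
    first
      | (refine ⟨1, Or.inl rfl, ?_⟩
         ext a b
         fin_cases a <;> fin_cases b <;>
           simp [pauliMat, Matrix.mul_apply, Fin.sum_univ_two, Matrix.one_apply] <;>
           ring_nf <;> simp [Complex.I_sq])
      | (refine ⟨-1, Or.inr rfl, ?_⟩
         ext a b
         fin_cases a <;> fin_cases b <;>
           simp [pauliMat, Matrix.mul_apply, Fin.sum_univ_two, Matrix.one_apply] <;>
           ring_nf <;> simp [Complex.I_sq])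

lemma nPauli_eq_tens {n : ℕ} (g : Fin n → Fin 4) :
    nPauli g = tens (fun k => pauliMat (g k)) := rfl

lemma idN_eq_one (n : ℕ) : idN n = 1 := by
  have : idN n = tens (fun _ : Fin n => (1 : Matrix (Fin 2) (Fin 2) ℂ)) := rfl
  rw [this, tens_one]

lemma nPauli_sq {n : ℕ} (g : Fin n → Fin 4) : nPauli g * nPauli g = 1 := by
  rw [nPauli_eq_tens, tens_mul]
  have : (fun k => pauliMat (g k) * pauliMat (g k)) =
      (fun _ : Fin n => (1 : Matrix (Fin 2) (Fin 2) ℂ)) := funext fun k => pauli_sq (g k)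
  rw [this, tens_one]

lemma prod_sign {κ : Type*} (s : Finset κ) (f : κ → ℂ)
    (hf : ∀ k ∈ s, f k = 1 ∨ f k = -1) : (∏ k ∈ s, f k) = 1 ∨ (∏ k ∈ s, f k) = -1 := by
  refine Finset.prod_induction f (fun z => z = 1 ∨ z = -1) ?_ (Or.inl rfl) hf
  rintro a b (rfl | rfl) (rfl | rfl) <;> norm_num

lemma prod_sign_int {κ : Type*} (s : Finset κ) (f : κ → ℤ)
    (hf : ∀ k ∈ s, f k = 1 ∨ f k = -1) : (∏ k ∈ s, f k) = 1 ∨ (∏ k ∈ s, f k) = -1 := by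
  refine Finset.prod_induction f (fun z => z = 1 ∨ z = -1) ?_ (Or.inl rfl) hf
  rintro a b (rfl | rfl) (rfl | rfl) <;> norm_num

lemma pauliObs_comm_or {n : ℕ} {M N : QMat n}
    (hM : IsPauliObs n M) (hN : IsPauliObs n N) :
    ∃ ε : ℂ, (ε = 1 ∨ ε = -1) ∧ M * N = ε • (N * M) := by
  obtain ⟨g, rfl⟩ := hM
  obtain ⟨g', rfl⟩ := hN
  choose ε hε1 hε2 using fun k => pauli_comm (g k) (g' k)
  refine ⟨∏ k, ε k, prod_sign _ _ (fun k _ => hε1 k), ?_⟩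
  rw [nPauli_eq_tens, nPauli_eq_tens, tens_mul, tens_mul]
  have : (fun k => pauliMat (g k) * pauliMat (g' k)) =
      (fun k => ε k • (pauliMat (g' k) * pauliMat (g k))) := funext hε2
  rw [this, tens_smul]

lemma pauliObs_comm_of_not_anticomm {n : ℕ} {M N : QMat n}
    (hM : IsPauliObs n M) (hN : IsPauliObs n N) (h : ¬ M * N = -(N * M)) :
    M * N = N * M := by
  obtain ⟨ε, hε1, hε2⟩ := pauliObs_comm_or hM hN
  rcases hε1 with rfl | rfl
  · simpa using hε2
  · exact absurd (by simpa using hε2) h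

lemma natFinsetProd_eq_prod {M : Type*} [CommMonoid M] (s : Finset ℕ) (f : ℕ → M) :
    natFinsetProd s f = ∏ v ∈ s, f v := by
  rw [natFinsetProd, Finset.prod, ← Finset.sort_eq s (· ≤ ·)]
  rfl

lemma exists_common_eigvec {T : Type*} [Fintype T] [DecidableEq T] [Nonempty T] :
    ∀ l : List (Matrix T T ℂ), (∀ M ∈ l, ∀ N ∈ l, M * N = N * M) → (∀ M ∈ l, M * M = 1) →
    ∃ x : T → ℂ, x ≠ 0 ∧ ∀ M ∈ l, M.mulVec x = x ∨ M.mulVec x = -x := by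
  intro l
  induction l with
  | nil =>
    intro _ _
    refine ⟨fun _ => 1, ?_, by simp⟩
    intro h
    have := congrFun h (Classical.arbitrary T)
    simp at this
  | cons M l ih =>
    intro hcomm hsq
    obtain ⟨x, hx, hex⟩ := ih
      (fun A hA B hB => hcomm A (List.mem_cons_of_mem _ hA) B (List.mem_cons_of_mem _ hB))
      (fun A hA => hsq A (List.mem_cons_of_mem _ hA))
    have hM2 : M * M = 1 := hsq M (List.mem_cons_self)
    by_cases hy : x + M.mulVec x = 0
    · refine ⟨x, hx, ?_⟩
      intro N hN
      rcases List.mem_cons.mp hN with rfl | hN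
      · exact Or.inr (eq_neg_of_add_eq_zero_right (by linear_combination (norm := abel) hy))
      · exact hex N hN
    · refine ⟨x + M.mulVec x, hy, ?_⟩
      intro N hN
      rcases List.mem_cons.mp hN with rfl | hN
      · left
        rw [Matrix.mulVec_add, Matrix.mulVec_mulVec, hM2, Matrix.one_mulVec]
        abel
      · have hc : N * M = M * N :=
          hcomm N (List.mem_cons_of_mem _ hN) M (List.mem_cons_self)
        have key : N.mulVec (x + M.mulVec x) = N.mulVec x + M.mulVec (N.mulVec x) := by
          rw [Matrix.mulVec_add, Matrix.mulVec_mulVec, hc, ← Matrix.mulVec_mulVec]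
        rcases hex N hN with h1 | h1
        · left; rw [key, h1]
        · right; rw [key, h1, Matrix.mulVec_neg]; abel

lemma list_eig_prod {T : Type*} [Fintype T] [DecidableEq T]
    (β : ℕ → Matrix T T ℂ) (c : ℕ → ℂ) (x : T → ℂ) :
    ∀ l : List ℕ, (∀ v ∈ l, (β v).mulVec x = c v • x) →
      ((l.map β).prod).mulVec x = (l.map c).prod • x := by
  intro l
  induction l with
  | nil => simp [Matrix.one_mulVec]
  | cons v l ih =>
    intro h
    have h1 := h v (List.mem_cons_self)
    have h2 := ih (fun w hw => h w (List.mem_cons_of_mem _ hw))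
    simp only [List.map_cons, List.prod_cons]
    rw [← Matrix.mulVec_mulVec, h2, Matrix.mulVec_smul, h1, smul_smul, mul_comm]

lemma list_kron_prod {n₁ n₂ : ℕ} (α₁ : ℕ → QMat n₁) (α₂ : ℕ → QMat n₂) :
    ∀ l : List ℕ,
      ((l.map fun v => α₁ v ⊗ₖ α₂ v).prod) = ((l.map α₁).prod) ⊗ₖ ((l.map α₂).prod) := by
  intro l
  induction l with
  | nil => simp [Matrix.one_kronecker_one]
  | cons v l ih =>
    simp only [List.map_cons, List.prod_cons, ih, Matrix.mul_kronecker_mul]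

lemma neg_kron_neg {l m n p : Type*} (A : Matrix l m ℂ) (B : Matrix n p ℂ) :
    (-A) ⊗ₖ (-B) = A ⊗ₖ B := by
  ext i j
  simp [Matrix.kroneckerMap_apply]

lemma quantumSgn_cases {n : ℕ} (α : ℕ → QMat n) (h : Finset ℕ) :
    quantumSgn α h = 1 ∨ quantumSgn α h = -1 := by
  unfold quantumSgn; split <;> simp

lemma quantumSgn_spec {n : ℕ} (α : ℕ → QMat n) (h : Finset ℕ)
    (hp : natFinsetProd h α = idN n ∨ natFinsetProd h α = -(idN n)) :
    natFinsetProd h α = ((quantumSgn α h : ℤ) : ℂ) • (1 : QMat n) := by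
  unfold quantumSgn
  split_ifs with hcase
  · rw [hcase, idN_eq_one]; simp
  · rcases hp with hp | hp
    · exact absurd hp hcase
    · rw [hp, idN_eq_one]; simp

end Aux

set_option maxHeartbeats 2000000 in
/-- All Pauli assignments of a hypergram have the same
contextuality degree. -/
theorem pauli_assignments_same_contextuality_degree
    (V : Finset ℕ) (H G : Finset (Finset ℕ)) (hgram : IsHypergram V H G)
    {n₁ n₂ : ℕ} (α₁ : ℕ → QMat n₁) (α₂ : ℕ → QMat n₂)
    (h₁ : IsPauliAssignment V H G n₁ α₁) (h₂ : IsPauliAssignment V H G n₂ α₂) :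
    contextualityDegree H α₁ = contextualityDegree H α₂ := by
  classical
  obtain ⟨-, hH, -, -, -, -, -⟩ := hgram
  obtain ⟨hobs₁, -, -, hG₁, hprod₁⟩ := h₁
  obtain ⟨hobs₂, -, -, hG₂, hprod₂⟩ := h₂
  set β : ℕ → Matrix ((Fin n₁ → Fin 2) × (Fin n₂ → Fin 2))
      ((Fin n₁ → Fin 2) × (Fin n₂ → Fin 2)) ℂ := fun v => α₁ v ⊗ₖ α₂ v with hβ
  have hβcomm : ∀ v ∈ V, ∀ w ∈ V, β v * β w = β w * β v := by
    intro v hv w hw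
    by_cases hvw : v = w
    · subst hvw; rfl
    by_cases hG : ({v, w} : Finset ℕ) ∈ G
    · have e1 : α₁ v * α₁ w = -(α₁ w * α₁ v) := (hG₁ v hv w hw hvw).mpr hG
      have e2 : α₂ v * α₂ w = -(α₂ w * α₂ v) := (hG₂ v hv w hw hvw).mpr hG
      show (α₁ v ⊗ₖ α₂ v) * (α₁ w ⊗ₖ α₂ w) = (α₁ w ⊗ₖ α₂ w) * (α₁ v ⊗ₖ α₂ v)
      rw [← Matrix.mul_kronecker_mul, ← Matrix.mul_kronecker_mul, e1, e2,
        neg_kron_neg]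
    · have e1 : α₁ v * α₁ w = α₁ w * α₁ v :=
        pauliObs_comm_of_not_anticomm (hobs₁ v hv) (hobs₁ w hw)
          (fun hcon => hG ((hG₁ v hv w hw hvw).mp hcon))
      have e2 : α₂ v * α₂ w = α₂ w * α₂ v :=
        pauliObs_comm_of_not_anticomm (hobs₂ v hv) (hobs₂ w hw)
          (fun hcon => hG ((hG₂ v hv w hw hvw).mp hcon))
      show (α₁ v ⊗ₖ α₂ v) * (α₁ w ⊗ₖ α₂ w) = (α₁ w ⊗ₖ α₂ w) * (α₁ v ⊗ₖ α₂ v)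
      rw [← Matrix.mul_kronecker_mul, ← Matrix.mul_kronecker_mul, e1, e2]
  have hβsq : ∀ v ∈ V, β v * β v = 1 := by
    intro v hv
    obtain ⟨g1, e1⟩ := hobs₁ v hv
    obtain ⟨g2, e2⟩ := hobs₂ v hv
    show (α₁ v ⊗ₖ α₂ v) * (α₁ v ⊗ₖ α₂ v) = 1
    rw [← Matrix.mul_kronecker_mul, e1, e2, nPauli_sq, nPauli_sq,
      Matrix.one_kronecker_one]
  have hmemβ : ∀ M ∈ (V.sort (· ≤ ·)).map β, ∃ v ∈ V, M = β v := by
    intro M hM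
    obtain ⟨v, hv, rfl⟩ := List.mem_map.mp hM
    exact ⟨v, (Finset.mem_sort _).mp hv, rfl⟩
  obtain ⟨x, hx, hex⟩ := exists_common_eigvec ((V.sort (· ≤ ·)).map β)
    (by rintro M hM N hN
        obtain ⟨v, hv, rfl⟩ := hmemβ M hM
        obtain ⟨w, hw, rfl⟩ := hmemβ N hN
        exact hβcomm v hv w hw)
    (by rintro M hM
        obtain ⟨v, hv, rfl⟩ := hmemβ M hM
        exact hβsq v hv)
  set a : ℕ → ℤ := fun v => if (β v).mulVec x = x then 1 else -1 with haDef
  have ha : ∀ v, a v = 1 ∨ a v = -1 := by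
    intro v; rw [haDef]; dsimp only; split_ifs <;> simp
  have hev : ∀ v ∈ V, (β v).mulVec x = ((a v : ℤ) : ℂ) • x := by
    intro v hv
    have hmem : β v ∈ (V.sort (· ≤ ·)).map β :=
      List.mem_map_of_mem (f := β) ((Finset.mem_sort _).mpr hv)
    rcases hex _ hmem with h1 | h1
    · rw [haDef]; dsimp only; rw [if_pos h1, h1]; simp
    · have hne : ¬ (β v).mulVec x = x := by
        intro h2
        apply hx
        have h3 : x = -x := by rw [← h1, h2]
        have h4 : x + x = 0 := by nth_rewrite 2 [h3]; simp
        have h5 : (2 : ℂ) • x = 0 := by rw [two_smul]; exact h4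
        simpa using (smul_eq_zero.mp h5).resolve_left (by norm_num)
      rw [haDef]; dsimp only; rw [if_neg hne, h1]; simp
  have key : ∀ h ∈ H, quantumSgn α₁ h * quantumSgn α₂ h = classicalSgn a h := by
    intro h hh
    have hsub : h ⊆ V := (hH h hh).1
    have e1 : natFinsetProd h α₁ = ((quantumSgn α₁ h : ℤ) : ℂ) • 1 :=
      quantumSgn_spec _ _ (hprod₁ h hh)
    have e2 : natFinsetProd h α₂ = ((quantumSgn α₂ h : ℤ) : ℂ) • 1 :=
      quantumSgn_spec _ _ (hprod₂ h hh)
    have eβ : natFinsetProd h β =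
        (((quantumSgn α₁ h * quantumSgn α₂ h : ℤ) : ℂ)) • 1 := by
      rw [natFinsetProd, list_kron_prod,
        show ((h.sort (· ≤ ·)).map α₁).prod = natFinsetProd h α₁ from rfl,
        show ((h.sort (· ≤ ·)).map α₂).prod = natFinsetProd h α₂ from rfl, e1, e2,
        Matrix.smul_kronecker, Matrix.kronecker_smul, Matrix.one_kronecker_one,
        smul_smul]
      push_cast
      ring_nf
    have eβ' : (natFinsetProd h β).mulVec x = ((classicalSgn a h : ℤ) : ℂ) • x := by
      rw [natFinsetProd,
        list_eig_prod β (fun v => ((a v : ℤ) : ℂ)) x _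
          (fun v hv => hev v (hsub ((Finset.mem_sort _).mp hv)))]
      congr 1
      rw [show ((h.sort (· ≤ ·)).map (fun v => ((a v : ℤ) : ℂ))).prod =
          natFinsetProd h (fun v => ((a v : ℤ) : ℂ)) from rfl,
        natFinsetProd_eq_prod, classicalSgn]
      push_cast
      rfl
    rw [eβ, Matrix.smul_mulVec, Matrix.one_mulVec] at eβ'
    exact_mod_cast smul_left_injective ℂ hx eβ'
  have hq1 : ∀ (h : Finset ℕ) {m : ℕ} (α : ℕ → QMat m),
      quantumSgn α h * quantumSgn α h = 1 := by
    intro h m α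
    rcases quantumSgn_cases α h with e | e <;> rw [e] <;> norm_num
  have qrel₁ : ∀ h ∈ H, quantumSgn α₁ h = quantumSgn α₂ h * classicalSgn a h := by
    intro h hh
    have hk := key h hh
    have h2 := hq1 h α₂
    linear_combination quantumSgn α₂ h * hk - quantumSgn α₁ h * h2
  have qrel₂ : ∀ h ∈ H, quantumSgn α₂ h = quantumSgn α₁ h * classicalSgn a h := by
    intro h hh
    have hk := key h hh
    have h2 := hq1 h α₁
    linear_combination quantumSgn α₁ h * hk - quantumSgn α₂ h * h2
  have main : ∀ {m₁ m₂ : ℕ} (γ₁ : ℕ → QMat m₁) (γ₂ : ℕ → QMat m₂),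
      (∀ h ∈ H, quantumSgn γ₁ h = quantumSgn γ₂ h * classicalSgn a h) →
      ∀ d, (∃ b : ℕ → ℤ, (∀ v, b v = 1 ∨ b v = -1) ∧
          d = (H.filter (fun h => quantumSgn γ₁ h ≠ classicalSgn b h)).card) →
        (∃ b : ℕ → ℤ, (∀ v, b v = 1 ∨ b v = -1) ∧
          d = (H.filter (fun h => quantumSgn γ₂ h ≠ classicalSgn b h)).card) := by
    intro m₁ m₂ γ₁ γ₂ hrel d hd
    obtain ⟨b, hb, rfl⟩ := hd
    refine ⟨fun v => a v * b v, fun v => by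
      rcases ha v with e | e <;> rcases hb v with e' | e' <;> simp [e, e'], ?_⟩
    congr 1
    apply Finset.filter_congr
    intro h hh
    have hrel' := hrel h hh
    have hmul : classicalSgn (fun v => a v * b v) h =
        classicalSgn a h * classicalSgn b h := Finset.prod_mul_distrib
    have hsa : classicalSgn a h = 1 ∨ classicalSgn a h = -1 :=
      prod_sign_int _ _ (fun v _ => ha v)
    rw [hrel', hmul]
    rcases hsa with e | e <;> rw [e] <;>
      constructor <;> intro h1 h2 <;> apply h1 <;> omega
  unfold contextualityDegree
  congr 1
  ext d
  simp only [Set.mem_setOf_eq]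
  exact ⟨main α₁ α₂ qrel₁ d, main α₂ α₁ qrel₂ d⟩

end
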